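/- arXiv:2209.13098 — 2 statements merged into one kernel-verified Lean document; each statement's English description precedes it below -/
import Mathlib

section
/- Let F : ℝ² → ℝ² be a continuous vector field and V : ℝ² → ℝ a continuously differentiable function solving the Hamilton–Jacobi equation ⟨∇V(x), F(x)⟩ + ½⟨∇V(x), ∇V(x)⟩ = 0 for all x. Let c ∈ ℝ and consider the controlled vector field F_c(x) := F(x) + c∇V(x). Then the function W := (1 − 2c)V solves the Hamilton–Jacobi equation for the controlled field: ⟨∇W(x), F_c(x)⟩ + ½⟨∇W(x), ∇W(x)⟩ = 0 for all x. Moreover the controlled field admits the orthogonal decomposition F_c(x) = −½(1 − 2c)∇V(x) + l(x) with the same rotational component l(x) = F(x) + ½∇V(x), which satisfies ⟨l(x), ∇V(x)⟩ = 0. -/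
open scoped RealInnerProductSpace

/-- Under the control `u = c∇V`, the controlled field `F_c = F + c∇V` has quasipotential
`W = (1 − 2c)V`: `W` solves the Hamilton–Jacobi equation for `F_c`, and `F_c` admits the
orthogonal decomposition `F_c = −½(1 − 2c)∇V + l` with the same rotational component
`l = F + ½∇V`, which is orthogonal to `∇V`. -/
theorem controlled_field_quasipotential
    (F : EuclideanSpace ℝ (Fin 2) → EuclideanSpace ℝ (Fin 2)) (hF : Continuous F)
    (V : EuclideanSpace ℝ (Fin 2) → ℝ) (hV : ContDiff ℝ 1 V)
    (hHJ : ∀ x, ⟪gradient V x, F x⟫ + (1 / 2) * ⟪gradient V x, gradient V x⟫ = 0)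
    (c : ℝ)
    (Fc : EuclideanSpace ℝ (Fin 2) → EuclideanSpace ℝ (Fin 2))
    (hFc : Fc = fun x => F x + c • gradient V x)
    (W : EuclideanSpace ℝ (Fin 2) → ℝ) (hW : W = fun x => (1 - 2 * c) * V x)
    (l : EuclideanSpace ℝ (Fin 2) → EuclideanSpace ℝ (Fin 2))
    (hl : l = fun x => F x + (1 / 2 : ℝ) • gradient V x) :
    (∀ x, ⟪gradient W x, Fc x⟫ + (1 / 2) * ⟪gradient W x, gradient W x⟫ = 0) ∧
    (∀ x, Fc x = -(((1 / 2) * (1 - 2 * c)) • gradient V x) + l x) ∧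
    (∀ x, ⟪l x, gradient V x⟫ = 0) := by

  have hdiff : ∀ x, HasGradientAt V (gradient V x) x := fun x =>
    ((hV.differentiable one_ne_zero) x).hasGradientAt
  have hgradW : ∀ x, gradient W x = (1 - 2 * c) • gradient V x := by
    intro x
    have h1 : HasFDerivAt V ((InnerProductSpace.toDual ℝ _) (gradient V x)) x :=
      (hdiff x).hasFDerivAt
    have h2 : HasFDerivAt W ((1 - 2 * c) • (InnerProductSpace.toDual ℝ _) (gradient V x)) x := by
      rw [hW]; exact h1.const_smul (1 - 2 * c)
    have h3 : HasGradientAt W ((1 - 2 * c) • gradient V x) x := by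
      have := (InnerProductSpace.toDual ℝ (EuclideanSpace ℝ (Fin 2))).map_smul
        (1 - 2 * c) (gradient V x)
      rw [hasGradientAt_iff_hasFDerivAt, this]; exact h2
    exact h3.gradient
  refine ⟨?_, ?_, ?_⟩
  · intro x
    have h := hHJ x
    rw [hgradW, hFc]
    simp only [inner_smul_left, inner_add_right, inner_smul_right, map_sub, map_mul, map_one,
      RCLike.ofNat_re, conj_trivial]
    linear_combination (1 - 2 * c) * h
  · intro x
    rw [hFc, hl]
    module
  · intro x
    have h := hHJ x
    rw [hl]
    simp only [inner_add_left, inner_smul_left, conj_trivial]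
    rw [real_inner_comm (F x)] at *
    linarith
end

section
/- Let F : ℝ² → ℝ² be the Maier–Stein vector field with parameter γ = 1, i.e., F(x₁, x₂) = (x₁ − x₁³ − x₁ x₂², −(1 + x₁²) x₂), and define V : ℝ² → ℝ by V(x₁, x₂) = ½[(x₁² − 1)² + 2x₂²(x₁² + 1)]. Then V solves the Hamilton–Jacobi equation ⟨∇V(x), F(x)⟩ + ½⟨∇V(x), ∇V(x)⟩ = 0 for all x ∈ ℝ², and V(−1, 0) = V(1, 0) = 0. That is, the quasipotential of the Maier–Stein system with γ = 1 is exactly twice its potential function U(x₁, x₂) = ¼[(x₁² − 1)² + 2x₂²(x₁² + 1)]. -/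
open scoped RealInnerProductSpace
open InnerProductSpace

noncomputable def gvec (x : EuclideanSpace ℝ (Fin 2)) : EuclideanSpace ℝ (Fin 2) :=
  (EuclideanSpace.equiv (Fin 2) ℝ).symm
    ![2 * x 0 * ((x 0)^2 - 1) + 2 * (x 1)^2 * x 0, 2 * x 1 * ((x 0)^2 + 1)]

lemma gvec_apply0 (x : EuclideanSpace ℝ (Fin 2)) :
    gvec x 0 = 2 * x 0 * ((x 0)^2 - 1) + 2 * (x 1)^2 * x 0 := rfl
lemma gvec_apply1 (x : EuclideanSpace ℝ (Fin 2)) :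
    gvec x 1 = 2 * x 1 * ((x 0)^2 + 1) := rfl

lemma hasGrad (x : EuclideanSpace ℝ (Fin 2)) :
    HasGradientAt (fun x : EuclideanSpace ℝ (Fin 2) =>
      (1 / 2) * (((x 0) ^ 2 - 1) ^ 2 + 2 * (x 1) ^ 2 * ((x 0) ^ 2 + 1))) (gvec x) x := by
  rw [hasGradientAt_iff_hasFDerivAt]
  have h0 := (EuclideanSpace.proj (𝕜 := ℝ) (0 : Fin 2)).hasFDerivAt (x := x)
  have h1 := (EuclideanSpace.proj (𝕜 := ℝ) (1 : Fin 2)).hasFDerivAt (x := x)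
  have hsq : (fun x : EuclideanSpace ℝ (Fin 2) =>
      1 / 2 * ((x 0 ^ 2 - 1) ^ 2 + 2 * x 1 ^ 2 * (x 0 ^ 2 + 1)))
      = fun x : EuclideanSpace ℝ (Fin 2) =>
      1 / 2 * (((x 0 * x 0 - 1) * (x 0 * x 0 - 1)) + 2 * (x 1 * x 1) * (x 0 * x 0 + 1)) := by
    funext x; ring
  rw [hsq]
  have := (((((h0.mul h0).sub_const 1).mul ((h0.mul h0).sub_const 1)).add
    ((((h1.mul h1).const_mul 2)).mul ((h0.mul h0).add_const 1))).const_mul (1/2 : ℝ))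
  refine this.congr_fderiv ?_
  apply ContinuousLinearMap.ext
  intro y
  have hd : (toDual ℝ (EuclideanSpace ℝ (Fin 2))) (gvec x) y = ⟪gvec x, y⟫ := rfl
  simp only [hd, PiLp.inner_apply, RCLike.inner_apply, starRingEnd_apply, star_trivial,
    Fin.sum_univ_two, gvec_apply0, gvec_apply1]
  simp only [ContinuousLinearMap.smul_apply, ContinuousLinearMap.add_apply,
    ContinuousLinearMap.coe_smul', Pi.smul_apply, ContinuousLinearMap.sub_apply,
    ContinuousLinearMap.comp_apply, smul_eq_mul]
  simp [PiLp.proj_apply]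
  ring


/-- For `γ = 1` the quasipotential of the Maier–Stein system is exactly twice its
potential function: `V(x₁, x₂) = ½[(x₁² − 1)² + 2x₂²(x₁² + 1)]` solves the
Hamilton–Jacobi equation `⟨∇V, F⟩ + ½⟨∇V, ∇V⟩ = 0` and vanishes at the stable fixed
points `(−1, 0)` and `(1, 0)`. -/
theorem maier_stein_quasipotential_gamma_one
    (F : EuclideanSpace ℝ (Fin 2) → EuclideanSpace ℝ (Fin 2))
    (hF : ∀ x : EuclideanSpace ℝ (Fin 2),
      F x 0 = x 0 - (x 0) ^ 3 - x 0 * (x 1) ^ 2 ∧ F x 1 = -(1 + (x 0) ^ 2) * x 1)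
    (V : EuclideanSpace ℝ (Fin 2) → ℝ)
    (hV : V = fun x => (1 / 2) * (((x 0) ^ 2 - 1) ^ 2 + 2 * (x 1) ^ 2 * ((x 0) ^ 2 + 1))) :
    (∀ x, ⟪gradient V x, F x⟫ + (1 / 2) * ⟪gradient V x, gradient V x⟫ = 0) ∧
    V ((EuclideanSpace.equiv (Fin 2) ℝ).symm ![-1, 0]) = 0 ∧
    V ((EuclideanSpace.equiv (Fin 2) ℝ).symm ![1, 0]) = 0 := by
  subst hV
  refine ⟨fun x => ?_, by norm_num, by norm_num⟩
  have hg : gradient (fun x : EuclideanSpace ℝ (Fin 2) =>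
      (1 / 2) * (((x 0) ^ 2 - 1) ^ 2 + 2 * (x 1) ^ 2 * ((x 0) ^ 2 + 1))) x = gvec x :=
    (hasGrad x).gradient
  rw [hg]
  simp only [PiLp.inner_apply, RCLike.inner_apply, starRingEnd_apply, star_trivial,
    Fin.sum_univ_two, gvec_apply0, gvec_apply1, (hF x).1, (hF x).2]
  ring
end
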